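/- Let (N,v) be a minimal incomplete game with n ≥ 2 players, v({i}) ≥ 0 for all i ∈ N, and total excess Δ > 0. Then the weak Shapley value over positive extensions is a proper subset of the imputation set I(v): the Shapley value of every positive extension lies in I(v), and for every k ∈ N there is no positive extension w of (N,v) with φ(w) = I^k. -/

import Mathlib

open Finset

/-- The Shapley value `φ_i(w) = (1/n) ∑_{S ⊆ N∖{i}} C(n-1,|S|)⁻¹ (w(S∪{i}) - w(S))`. -/
noncomputable def shapley (n : ℕ) (w : Finset (Fin n) → ℝ) (i : Fin n) : ℝ :=
  (1 / (n : ℝ)) * ∑ S ∈ (Finset.univ.erase i).powerset,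
    ((Nat.choose (n - 1) S.card : ℝ))⁻¹ * (w (insert i S) - w S)

/-- A game is convex if `w(S) + w(T) ≤ w(S ∪ T) + w(S ∩ T)` for all coalitions. -/
def IsConvexGame {n : ℕ} (w : Finset (Fin n) → ℝ) : Prop :=
  ∀ S T : Finset (Fin n), w S + w T ≤ w (S ∪ T) + w (S ∩ T)

/-- The upper vector `b^w_i = w(N) - w(N∖{i})`. -/
noncomputable def upperVec {n : ℕ} (w : Finset (Fin n) → ℝ) (i : Fin n) : ℝ :=
  w Finset.univ - w (Finset.univ.erase i)

/-- The gap function `g^w(S) = ∑_{i∈S} b^w_i - w(S)`. -/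
noncomputable def gap {n : ℕ} (w : Finset (Fin n) → ℝ) (S : Finset (Fin n)) : ℝ :=
  (∑ i ∈ S, upperVec w i) - w S

/-- A game is 1-convex if `∑ b^w_i ≥ w(N)` and
`w(S) ≤ w(N) - ∑_{i ∈ N∖S} b^w_i` for every nonempty `S`. -/
def IsOneConvex {n : ℕ} (w : Finset (Fin n) → ℝ) : Prop :=
  w Finset.univ ≤ (∑ i, upperVec w i) ∧
  ∀ S : Finset (Fin n), S.Nonempty →
    w S ≤ w Finset.univ - ∑ i ∈ Finset.univ \ S, upperVec w i

/-- `w` is an extension of the minimal incomplete game given by singleton values `v`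
and grand-coalition value `vN`. -/
def IsExtension {n : ℕ} (v : Fin n → ℝ) (vN : ℝ) (w : Finset (Fin n) → ℝ) : Prop :=
  w ∅ = 0 ∧ (∀ i, w {i} = v i) ∧ w Finset.univ = vN

/-- Harsanyi dividend `d_w(T) = ∑_{S ⊆ T} (-1)^{|T|-|S|} w(S)`. -/
noncomputable def dividend {n : ℕ} (w : Finset (Fin n) → ℝ) (T : Finset (Fin n)) : ℝ :=
  ∑ S ∈ T.powerset, (-1 : ℝ) ^ (T.card - S.card) * w S

/-- A game is positive if all Harsanyi dividends of nonempty coalitions are nonnegative. -/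
def IsPositive {n : ℕ} (w : Finset (Fin n) → ℝ) : Prop :=
  ∀ T : Finset (Fin n), T.Nonempty → 0 ≤ dividend w T

/-- The extreme game `v^k`. -/
noncomputable def vgame (n : ℕ) (v : Fin n → ℝ) (Δ : ℝ) (k : Fin n)
    (S : Finset (Fin n)) : ℝ :=
  if 2 ≤ S.card ∧ k ∈ S then (∑ j ∈ S, v j) + Δ else ∑ j ∈ S, v j

/-- The extreme game `v_T` (for `T` with `|T| ≥ 2`). -/
noncomputable def vTgame (n : ℕ) (v : Fin n → ℝ) (Δ : ℝ) (T : Finset (Fin n))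
    (S : Finset (Fin n)) : ℝ :=
  if T ⊆ S then (∑ j ∈ S, v j) + Δ else ∑ j ∈ S, v j

/-- The extreme-ray game `e_T`. -/
def eTgame (n : ℕ) (T S : Finset (Fin n)) : ℝ := if S = T then -1 else 0

/-- The index set `E = {T ⊆ N : 2 ≤ |T| ≤ n-2}`. -/
def raysIndex (n : ℕ) : Finset (Finset (Fin n)) :=
  Finset.univ.filter (fun T => 2 ≤ T.card ∧ T.card ≤ n - 2)

/-- The index set `N₁ = {T ⊆ N : |T| ≥ 2}`. -/
def coalN1 (n : ℕ) : Finset (Finset (Fin n)) :=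
  Finset.univ.filter (fun T => 2 ≤ T.card)

/-- The convex combination `w_α = ∑_k α_k v^k`. -/
noncomputable def walpha (n : ℕ) (v : Fin n → ℝ) (Δ : ℝ) (α : Fin n → ℝ)
    (S : Finset (Fin n)) : ℝ :=
  ∑ k, α k * vgame n v Δ k S

/-- The game `w_{α,β} = ∑_k α_k v^k + ∑_{T∈E} β_T e_T`. -/
noncomputable def walphabeta (n : ℕ) (v : Fin n → ℝ) (Δ : ℝ) (α : Fin n → ℝ)
    (β : Finset (Fin n) → ℝ) (S : Finset (Fin n)) : ℝ :=
  (∑ k, α k * vgame n v Δ k S) + ∑ T ∈ raysIndex n, β T * eTgame n T S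

/-- The game `w_A = ∑_{T∈N₁} α_T v_T`. -/
noncomputable def wAgame (n : ℕ) (v : Fin n → ℝ) (Δ : ℝ) (A : Finset (Fin n) → ℝ)
    (S : Finset (Fin n)) : ℝ :=
  ∑ T ∈ coalN1 n, A T * vTgame n v Δ T S

/-- The imputation set `I(v)`. -/
def imputations (n : ℕ) (v : Fin n → ℝ) (vN : ℝ) : Set (Fin n → ℝ) :=
  {x | (∑ i, x i) = vN ∧ ∀ i, v i ≤ x i}

/-- The imputation `I^k`. -/
noncomputable def Ik (n : ℕ) (v : Fin n → ℝ) (Δ : ℝ) (k : Fin n) : Fin n → ℝ :=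
  fun i => if i = k then v i + Δ else v i

/-- The imputation `I^α`. -/
noncomputable def Ialpha (n : ℕ) (v : Fin n → ℝ) (Δ : ℝ) (α : Fin n → ℝ) : Fin n → ℝ :=
  fun i => v i + α i * Δ

/-- The core of a game. -/
def core {n : ℕ} (w : Finset (Fin n) → ℝ) : Set (Fin n → ℝ) :=
  {x | (∑ i, x i) = w Finset.univ ∧ ∀ S : Finset (Fin n), w S ≤ ∑ i ∈ S, x i}

/-- The marginal vector `m_σ^w`. -/
noncomputable def margVec {n : ℕ} (w : Finset (Fin n) → ℝ) (σ : Equiv.Perm (Fin n))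
    (i : Fin n) : ℝ :=
  w (insert i (Finset.univ.filter (fun j => σ j < σ i))) -
    w (Finset.univ.filter (fun j => σ j < σ i))

/-- The Weber set: the convex hull of all marginal vectors. -/
noncomputable def weber {n : ℕ} (w : Finset (Fin n) → ℝ) : Set (Fin n → ℝ) :=
  convexHull ℝ {m | ∃ σ : Equiv.Perm (Fin n), m = margVec w σ}

/-- The maximal surplus `s_{ij}(x,w) = max {w(S) - x(S) : i ∈ S, j ∉ S}`. -/
noncomputable def surplus {n : ℕ} (w : Finset (Fin n) → ℝ) (x : Fin n → ℝ)
    (i j : Fin n) : ℝ :=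
  sSup {r : ℝ | ∃ S : Finset (Fin n), i ∈ S ∧ j ∉ S ∧ r = w S - ∑ m ∈ S, x m}

/-- The prekernel of a game. -/
def prekernel {n : ℕ} (w : Finset (Fin n) → ℝ) : Set (Fin n → ℝ) :=
  {x | (∑ i, x i) = w Finset.univ ∧
    ∀ i j : Fin n, i ≠ j → surplus w x i j = surplus w x j i}

/-- the weak Shapley value over positive extensions is a proper subset of
the imputation set: every positive extension has its Shapley value in `I(v)`, and no
positive extension has Shapley value `I^k`. -/
lemma sum_powerset_filter_subset {X : Type*} [DecidableEq X] (A B : Finset X) (hAB : A ⊆ B)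
    (f : Finset X → ℝ) :
    ∑ S ∈ B.powerset.filter (fun S => A ⊆ S), f S = ∑ R ∈ (B \ A).powerset, f (A ∪ R) := by
  refine Finset.sum_nbij' (fun S => S \ A) (fun R => A ∪ R) ?_ ?_ ?_ ?_ ?_
  · intro S hS
    simp only [mem_filter, mem_powerset] at hS
    exact mem_powerset.2 (sdiff_subset_sdiff hS.1 le_rfl)
  · intro R hR
    simp only [mem_powerset] at hR
    exact mem_filter.2 ⟨mem_powerset.2 (union_subset hAB (hR.trans sdiff_subset)),
      subset_union_left⟩
  · intro S hS
    simp only [mem_filter, mem_powerset] at hS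
    exact union_sdiff_of_subset hS.2
  · intro R hR
    simp only [mem_powerset] at hR
    exact union_sdiff_cancel_left (disjoint_sdiff.mono_right hR)
  · intro S hS
    simp only [mem_filter, mem_powerset] at hS
    rw [union_sdiff_of_subset hS.2]

lemma alt_sum_real {X : Type*} [DecidableEq X] (M : Finset X) :
    ∑ R ∈ M.powerset, (-1:ℝ)^R.card = if M = ∅ then 1 else 0 := by
  have h := Finset.sum_powerset_neg_one_pow_card (x := M)
  by_cases hM : M = ∅
  · simp [hM]
  · rw [if_neg hM] at h ⊢
    exact_mod_cast congrArg (fun z : ℤ => (z : ℝ)) h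

lemma hockey (t m : ℕ) :
    ∑ j ∈ range (m+1), Nat.choose (t+j) t = Nat.choose (t+m+1) (t+1) := by
  induction m with
  | zero => simp
  | succ m ih =>
    rw [Finset.sum_range_succ, ih, show t+(m+1)+1 = (t+m+1)+1 from rfl,
      Nat.choose_succ_succ (t+m+1) t]
    rw [show t+(m+1) = t+m+1 from rfl, Nat.succ_eq_add_one]
    omega

lemma key_sum (n t : ℕ) (ht1 : 1 ≤ t) (htn : t ≤ n) :
    (1/(n:ℝ)) * ∑ j ∈ range (n - t + 1),
      ((n-t).choose j) • ((Nat.choose (n-1) ((t-1)+j) : ℝ))⁻¹ = ((t:ℝ))⁻¹ := by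
  have hn : 0 < n := lt_of_lt_of_le ht1 htn
  have hZ : 0 < Nat.choose n t := Nat.choose_pos htn
  have hnt : t * Nat.choose n t = n * Nat.choose (n-1) (t-1) := by
    have h := Nat.add_one_mul_choose_eq (n-1) (t-1)
    rw [Nat.sub_add_cancel hn,
      Nat.sub_add_cancel ht1] at h
    rw [Nat.mul_comm, ← h]
  have hterm : ∀ j ∈ range (n - t + 1),
      (((n-t).choose j) • ((Nat.choose (n-1) ((t-1)+j) : ℝ))⁻¹)
      = (n:ℝ) * ((Nat.choose ((t-1)+j) (t-1) : ℝ) * (((t:ℝ) * (Nat.choose n t : ℝ))⁻¹)) := by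
    intro j hj
    rw [mem_range] at hj
    have hjm : j ≤ n - t := by omega
    have hkn : (t-1) + j ≤ n - 1 := by omega
    have hX : 0 < Nat.choose (n-1) ((t-1)+j) := Nat.choose_pos hkn
    have hmain : Nat.choose (n-t) j * (t * Nat.choose n t)
        = n * (Nat.choose (n-1) ((t-1)+j) * Nat.choose ((t-1)+j) (t-1)) := by
      rw [hnt, Nat.choose_mul (Nat.le_add_right _ _)]
      rw [show (n-1) - (t-1) = n - t by omega, show (t-1) + j - (t-1) = j by omega]
      ring
    rw [nsmul_eq_mul]
    have hXne : (Nat.choose (n-1) ((t-1)+j) : ℝ) ≠ 0 := Nat.cast_ne_zero.2 hX.ne'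
    have hZne : (Nat.choose n t : ℝ) ≠ 0 := Nat.cast_ne_zero.2 hZ.ne'
    have htne : (t:ℝ) ≠ 0 := Nat.cast_ne_zero.2 (by omega)
    field_simp
    have hm : ((n-t).choose j : ℝ) * (t * n.choose t)
        = n * ((n-1).choose (t-1+j) * (t-1+j).choose (t-1)) := by exact_mod_cast hmain
    linear_combination hm
  rw [Finset.sum_congr rfl hterm, ← Finset.mul_sum, ← Finset.sum_mul]
  have hhs : ∑ j ∈ range (n-t+1), (Nat.choose ((t-1)+j) (t-1) : ℝ) = (Nat.choose n t : ℝ) := by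
    have h := hockey (t-1) (n-t)
    rw [show (t-1) + (n-t) + 1 = n by omega, show (t-1)+1 = t by omega] at h
    exact_mod_cast congrArg (fun z : ℕ => (z:ℝ)) h
  rw [hhs]
  have hZne : (Nat.choose n t : ℝ) ≠ 0 := Nat.cast_ne_zero.2 hZ.ne'
  have htne : (t:ℝ) ≠ 0 := Nat.cast_ne_zero.2 (by omega)
  have hnne : (n:ℝ) ≠ 0 := Nat.cast_ne_zero.2 (by omega)
  field_simp

noncomputable def uG {n : ℕ} (T S : Finset (Fin n)) : ℝ := if T ⊆ S then 1 else 0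

lemma mobius {n : ℕ} (w : Finset (Fin n) → ℝ) (S : Finset (Fin n)) :
    w S = ∑ T ∈ S.powerset, dividend w T := by
  have step1 : ∀ T ∈ S.powerset, dividend w T
      = ∑ U ∈ S.powerset, if U ⊆ T then (-1:ℝ)^(T.card - U.card) * w U else 0 := by
    intro T hT
    rw [mem_powerset] at hT
    rw [dividend, ← Finset.sum_filter]
    refine Finset.sum_congr ?_ (fun _ _ => rfl)
    ext U
    simp only [mem_filter, mem_powerset]
    exact ⟨fun h => ⟨h.trans hT, h⟩, fun h => h.2⟩
  rw [Finset.sum_congr rfl step1, Finset.sum_comm]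
  have step2 : ∀ U ∈ S.powerset,
      (∑ T ∈ S.powerset, if U ⊆ T then (-1:ℝ)^(T.card - U.card) * w U else 0)
      = (if U = S then 1 else 0) * w U := by
    intro U hU
    rw [mem_powerset] at hU
    rw [← Finset.sum_filter, sum_powerset_filter_subset U S hU]
    have h1 : ∀ R ∈ (S \ U).powerset,
        (-1:ℝ)^((U ∪ R).card - U.card) * w U = (-1:ℝ)^R.card * w U := by
      intro R hR
      rw [mem_powerset] at hR
      rw [card_union_of_disjoint (disjoint_sdiff.mono_right hR), Nat.add_sub_cancel_left]
    rw [Finset.sum_congr rfl h1, ← Finset.sum_mul, alt_sum_real]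
    congr 1
    by_cases h : U = S
    · simp [h]
    · rw [if_neg h, if_neg]
      intro hc
      exact h (Finset.Subset.antisymm hU (by rwa [Finset.sdiff_eq_empty_iff_subset] at hc))
  rw [Finset.sum_congr rfl step2]
  simp only [ite_mul, one_mul, zero_mul]
  rw [Finset.sum_ite_eq' S.powerset S w, if_pos (mem_powerset.2 Finset.Subset.rfl)]

lemma shapley_linear {n : ℕ} {ι : Type*} (A : Finset ι) (c : ι → ℝ)
    (g : ι → Finset (Fin n) → ℝ) (i : Fin n) :
    shapley n (fun S => ∑ x ∈ A, c x * g x S) i = ∑ x ∈ A, c x * shapley n (g x) i := by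
  have h1 : ∀ S : Finset (Fin n), ((Nat.choose (n-1) S.card : ℝ))⁻¹ *
      ((∑ x ∈ A, c x * g x (insert i S)) - ∑ x ∈ A, c x * g x S)
      = ∑ x ∈ A, c x * (((Nat.choose (n-1) S.card : ℝ))⁻¹ * (g x (insert i S) - g x S)) := by
    intro S
    rw [← Finset.sum_sub_distrib, Finset.mul_sum]
    exact Finset.sum_congr rfl (fun x _ => by ring)
  rw [shapley, Finset.sum_congr rfl (fun S _ => h1 S), Finset.sum_comm, Finset.mul_sum]
  refine Finset.sum_congr rfl fun x _ => ?_
  rw [shapley, ← Finset.mul_sum]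
  ring

lemma shapley_uG {n : ℕ} (T : Finset (Fin n)) (i : Fin n) :
    shapley n (uG T) i = if i ∈ T then ((T.card : ℝ))⁻¹ else 0 := by
  by_cases hi : i ∈ T
  · rw [if_pos hi]
    have hn : 0 < n := i.pos
    have ht1 : 1 ≤ T.card := card_pos.2 ⟨i, hi⟩
    have htn : T.card ≤ n := by
      simpa using card_le_card (subset_univ T)
    have hAB : T.erase i ⊆ univ.erase i := erase_subset_erase _ (subset_univ T)
    have hstep : ∀ S ∈ (univ.erase i).powerset,
        ((Nat.choose (n-1) S.card : ℝ))⁻¹ * (uG T (insert i S) - uG T S)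
        = if T.erase i ⊆ S then ((Nat.choose (n-1) S.card : ℝ))⁻¹ else 0 := by
      intro S hS
      rw [mem_powerset] at hS
      have hiS : i ∉ S := fun h => (Finset.mem_erase.1 (hS h)).1 rfl
      have h1 : uG T (insert i S) = if T.erase i ⊆ S then 1 else 0 := by
        rw [uG]
        simp only [Finset.subset_insert_iff]
      have h2 : uG T S = 0 := by
        rw [uG, if_neg (fun h => hiS (h hi))]
      rw [h1, h2, sub_zero]
      split_ifs <;> ring
    rw [shapley, Finset.sum_congr rfl hstep, ← Finset.sum_filter,
      sum_powerset_filter_subset (T.erase i) (univ.erase i) hAB]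
    have hM : ((univ.erase i) \ (T.erase i)).card = n - T.card := by
      rw [card_sdiff_of_subset hAB, card_erase_of_mem (mem_univ i), card_erase_of_mem hi]
      simp only [card_univ, Fintype.card_fin]
      omega
    have hstep2 : ∀ R ∈ ((univ.erase i) \ (T.erase i)).powerset,
        ((Nat.choose (n-1) ((T.erase i) ∪ R).card : ℝ))⁻¹
        = (fun j => ((Nat.choose (n-1) ((T.card-1) + j) : ℝ))⁻¹) R.card := by
      intro R hR
      rw [mem_powerset] at hR
      rw [card_union_of_disjoint (disjoint_sdiff.mono_right hR), card_erase_of_mem hi]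
    rw [Finset.sum_congr rfl hstep2,
      Finset.sum_powerset_apply_card (fun j => ((Nat.choose (n-1) ((T.card-1) + j) : ℝ))⁻¹),
      hM]
    exact key_sum n T.card ht1 htn
  · rw [if_neg hi]
    have hstep : ∀ S ∈ (univ.erase i).powerset,
        ((Nat.choose (n-1) S.card : ℝ))⁻¹ * (uG T (insert i S) - uG T S) = 0 := by
      intro S _
      simp only [uG, Finset.subset_insert_iff_of_notMem hi, sub_self, mul_zero]
    rw [shapley, Finset.sum_congr rfl hstep, Finset.sum_const_zero, mul_zero]

lemma shapley_repr {n : ℕ} (w : Finset (Fin n) → ℝ) (i : Fin n) :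
    shapley n w i = ∑ T ∈ (univ : Finset (Fin n)).powerset,
      dividend w T * (if i ∈ T then ((T.card : ℝ))⁻¹ else 0) := by
  have hw : w = fun S => ∑ T ∈ (univ : Finset (Fin n)).powerset, dividend w T * uG T S := by
    funext S
    rw [mobius w S]
    simp only [uG, mul_ite, mul_one, mul_zero]
    rw [← Finset.sum_filter]
    refine Finset.sum_congr ?_ (fun _ _ => rfl)
    ext U
    simp only [mem_filter, mem_powerset]
    exact ⟨fun h => ⟨subset_univ U, h⟩, fun h => h.2⟩
  conv_lhs => rw [hw]
  rw [shapley_linear]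
  exact Finset.sum_congr rfl fun T _ => by rw [shapley_uG]


theorem stmt7 (n : ℕ) (hn : 2 ≤ n) (v : Fin n → ℝ) (hv : ∀ i, 0 ≤ v i)
    (vN : ℝ) (Δ : ℝ) (hΔdef : Δ = vN - ∑ i, v i) (hΔ : 0 < Δ) :
    (∀ w : Finset (Fin n) → ℝ, IsPositive w → IsExtension v vN w →
        (fun i => shapley n w i) ∈ imputations n v vN) ∧
    (∀ k : Fin n, ¬ ∃ w : Finset (Fin n) → ℝ, IsPositive w ∧ IsExtension v vN w ∧
        (fun i => shapley n w i) = Ik n v Δ k) := by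
  have hds : ∀ (w : Finset (Fin n) → ℝ), w ∅ = 0 → ∀ i : Fin n,
      dividend w {i} = w {i} := by
    intro w h0 i
    rw [dividend, show ({i} : Finset (Fin n)).powerset = {∅, {i}} by
        ext U; simp [Finset.subset_singleton_iff],
      Finset.sum_pair (Finset.singleton_ne_empty i).symm]
    simp [h0]
  have hd0 : ∀ (w : Finset (Fin n) → ℝ), w ∅ = 0 → dividend w ∅ = 0 := by
    intro w h0
    simp [dividend, h0]
  have hnonneg : ∀ (w : Finset (Fin n) → ℝ), w ∅ = 0 → IsPositive w → ∀ i : Fin n,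
      ∀ T ∈ (univ : Finset (Fin n)).powerset,
      0 ≤ dividend w T * (if i ∈ T then ((T.card : ℝ))⁻¹ else 0) := by
    intro w h0 hpos i T _
    by_cases hT : T = ∅
    · simp [hT, hd0 w h0]
    · refine mul_nonneg (hpos T (nonempty_iff_ne_empty.2 hT)) ?_
      split_ifs
      · positivity
      · exact le_refl 0
  have heff : ∀ (w : Finset (Fin n) → ℝ), w ∅ = 0 →
      ∑ i : Fin n, shapley n w i = w univ := by
    intro w h0
    rw [Finset.sum_congr rfl (fun i _ => shapley_repr w i), Finset.sum_comm]
    have hT : ∀ T ∈ (univ : Finset (Fin n)).powerset,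
        (∑ i : Fin n, dividend w T * (if i ∈ T then ((T.card : ℝ))⁻¹ else 0))
        = dividend w T := by
      intro T _
      rw [← Finset.mul_sum]
      by_cases hTe : T = ∅
      · simp [hTe, hd0 w h0]
      · have hc : (T.card : ℝ) ≠ 0 :=
          Nat.cast_ne_zero.2 (Finset.card_ne_zero.2 (nonempty_iff_ne_empty.2 hTe))
        have hsum : (∑ i : Fin n, (if i ∈ T then ((T.card : ℝ))⁻¹ else 0))
            = T.card * (T.card : ℝ)⁻¹ := by
          rw [← Finset.sum_filter, Finset.filter_mem_eq_inter, Finset.univ_inter,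
            Finset.sum_const, nsmul_eq_mul]
        rw [hsum, mul_inv_cancel₀ hc, mul_one]
    rw [Finset.sum_congr rfl hT, ← mobius w univ]
  constructor
  · intro w hpos hext
    obtain ⟨h0, h1, hN⟩ := hext
    refine ⟨by rw [heff w h0, hN], ?_⟩
    intro i
    have hmem : ({i} : Finset (Fin n)) ∈ (univ : Finset (Fin n)).powerset :=
      mem_powerset.2 (subset_univ _)
    have hfi : dividend w {i} * (if i ∈ ({i} : Finset (Fin n)) then (((({i} : Finset (Fin n)).card : ℕ) : ℝ))⁻¹ else 0) = v i := by
      rw [hds w h0 i, h1 i]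
      simp
    calc v i = dividend w {i} * (if i ∈ ({i} : Finset (Fin n)) then (((({i} : Finset (Fin n)).card : ℕ) : ℝ))⁻¹ else 0) := hfi.symm
    _ ≤ ∑ T ∈ (univ : Finset (Fin n)).powerset,
          dividend w T * (if i ∈ T then ((T.card : ℝ))⁻¹ else 0) :=
        Finset.single_le_sum (hnonneg w h0 hpos i) hmem
    _ = shapley n w i := (shapley_repr w i).symm
  · rintro k ⟨w, hpos, hext, heq⟩
    obtain ⟨h0, h1, hN⟩ := hext
    have hzero : ∀ T : Finset (Fin n), 2 ≤ T.card → dividend w T = 0 := by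
      intro T hT2
      obtain ⟨a, ha, b, hb, hab⟩ := Finset.one_lt_card.1 (by omega : 1 < T.card)
      obtain ⟨i, hiT, hik⟩ : ∃ i, i ∈ T ∧ i ≠ k := by
        by_cases hak : a = k
        · exact ⟨b, hb, fun h => hab (hak.trans h.symm)⟩
        · exact ⟨a, ha, hak⟩
      have hsh : shapley n w i = v i := by
        have h := congrFun heq i
        simpa [Ik, hik] using h
      have hsum : ∑ T ∈ (univ : Finset (Fin n)).powerset,
          dividend w T * (if i ∈ T then ((T.card : ℝ))⁻¹ else 0) = v i := by
        rw [← shapley_repr w i, hsh]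
      have hmem : ({i} : Finset (Fin n)) ∈ (univ : Finset (Fin n)).powerset :=
        mem_powerset.2 (subset_univ _)
      have hfi : dividend w {i} * (if i ∈ ({i} : Finset (Fin n)) then (((({i} : Finset (Fin n)).card : ℕ) : ℝ))⁻¹ else 0) = v i := by
        rw [hds w h0 i, h1 i]
        simp
      have hrest : ∑ T ∈ ((univ : Finset (Fin n)).powerset).erase {i},
          dividend w T * (if i ∈ T then ((T.card : ℝ))⁻¹ else 0) = 0 := by
        have h := Finset.add_sum_erase _ (fun T => dividend w T * (if i ∈ T then ((T.card : ℝ))⁻¹ else 0)) hmem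
        rw [hfi] at h
        linarith [hsum, h]
      have hTmem : T ∈ ((univ : Finset (Fin n)).powerset).erase {i} := by
        refine Finset.mem_erase.2 ⟨?_, mem_powerset.2 (subset_univ _)⟩
        intro h
        rw [h, Finset.card_singleton] at hT2
        omega
      have hfT := (Finset.sum_eq_zero_iff_of_nonneg
        (fun x hx => hnonneg w h0 hpos i x (Finset.mem_of_mem_erase hx))).1 hrest T hTmem
      rw [if_pos hiT] at hfT
      have hcne : ((T.card : ℕ) : ℝ)⁻¹ ≠ 0 :=
        inv_ne_zero (Nat.cast_ne_zero.2 (by omega))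
      exact (mul_eq_zero.1 hfT).resolve_right hcne
    have himg : (univ : Finset (Fin n)).image (fun i => ({i} : Finset (Fin n)))
        ⊆ (univ : Finset (Fin n)).powerset := fun T _ => mem_powerset.2 (subset_univ T)
    have hWuniv : w univ = ∑ i : Fin n, v i := by
      rw [mobius w univ, ← Finset.sum_subset himg]
      · rw [Finset.sum_image (fun a _ b _ h => Finset.singleton_injective h)]
        exact Finset.sum_congr rfl fun i _ => by rw [hds w h0 i, h1 i]
      · intro T _ hT
        rcases Nat.lt_or_ge T.card 2 with h2 | h2
        · interval_cases h : T.card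
          · rw [Finset.card_eq_zero.1 h]
            exact hd0 w h0
          · obtain ⟨a, rfl⟩ := Finset.card_eq_one.1 h
            exact absurd (Finset.mem_image.2 ⟨a, mem_univ a, rfl⟩) hT
        · exact hzero T h2
    rw [hN] at hWuniv
    linarith
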